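/- arXiv:math/0410487 — 2 statements merged into one kernel-verified Lean document; each statement's English description precedes it below -/
import Mathlib

section
/- Let Ω_1,…,Ω_r ∈ Mat_n(ℂ[ħ][[q]]) be flat with p_a := Ω_a|_{q=0} ∈ Mat_n(ℂ) independent of ħ. Assume in addition there are μ ∈ Mat_n(ℂ) and integers w_1,…,w_r such that, with the Euler operator E := 2ħ·∂/∂ħ + Σ_b w_b·θ_b acting entrywise, E(Ω_a) + μΩ_a − Ω_aμ = 2Ω_a for every a. Then the unique matrix S ∈ Mat_n(ℂ[ħ,ħ^{-1}]][[q]]) with S|_{q=0} = Id and ħθ_a S + Ω_a S − S p_a = 0 for all a satisfies E(S) + μS − Sμ = 0; moreover every q-coefficient of S is a Laurent polynomial in ħ, i.e. S ∈ Mat_n(ℂ[ħ,ħ^{-1}][[q]]). -/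
/-!
Work over ℂ.  We represent the coefficient ring `ℂ[ħ,ħ⁻¹]]` (formal Laurent
series `Σ_{k ≤ K} c_k ħ^k` with finitely many positive powers of `ħ`) as
`LaurentSeries ℂ` in the variable `t = ħ⁻¹`; thus the coefficient of `t^k`
is the coefficient of `ħ^{-k}`.  `AA r = ℂ[ħ,ħ⁻¹]][[q¹,…,qʳ]]`, and
`θ_a = qᵃ·∂/∂qᵃ` is the logarithmic partial derivative.
-/

noncomputable section

/-- `ℂ[ħ,ħ⁻¹]]`, realized as Laurent series in `t = ħ⁻¹`. -/
abbrev LS := LaurentSeries ℂ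

/-- `ħ = t⁻¹` where `t` is the `LaurentSeries` variable. -/
def hbarL : LS := HahnSeries.single (-1 : ℤ) (1 : ℂ)

/-- `ℂ[ħ,ħ⁻¹]][[q¹,…,qʳ]]`. -/
abbrev AA (r : ℕ) := MvPowerSeries (Fin r) LS

/-- The logarithmic derivative `θ_a = qᵃ ∂/∂qᵃ`:
on the monomial `q^d` it acts by multiplication by `d a`. -/
def thetaA {r : ℕ} (a : Fin r) (x : AA r) : AA r := fun d => (d a : LS) * x d

/-- `θ_a` acting entrywise on matrices. -/
def thetaMat {r n : ℕ} (a : Fin r) (M : Matrix (Fin n) (Fin n) (AA r)) :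
    Matrix (Fin n) (Fin n) (AA r) :=
  Matrix.of fun i j => thetaA a (M i j)

/-- `ħ` as an element of `ℂ[ħ,ħ⁻¹]][[q]]`. -/
def hbarA (r : ℕ) : AA r := MvPowerSeries.C (σ := Fin r) (R := LS) hbarL

/-- The constant term at `q = 0`. -/
def ccA {r : ℕ} : AA r →+* LS := MvPowerSeries.constantCoeff (σ := Fin r) (R := LS)

/-- The embedding `ℂ → ℂ[ħ,ħ⁻¹]][[q]]`. -/
def cA (r : ℕ) : ℂ →+* AA r := (MvPowerSeries.C (σ := Fin r) (R := LS)).comp HahnSeries.C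

/-- `x ∈ ℂ[ħ]`: `x` is a polynomial in `ħ` (no negative powers of `ħ`,
i.e. no positive powers of `t`; finiteness is automatic for Laurent series). -/
def isPolyH (x : LS) : Prop := ∀ k : ℤ, 0 < k → x.coeff k = 0

/-- `x ∈ ℂ[[ħ⁻¹]]`: `x` is regular at `ħ = ∞` (no positive powers of `ħ`). -/
def isRegH (x : LS) : Prop := ∀ k : ℤ, k < 0 → x.coeff k = 0

/-- `x ∈ ℂ`: `x` is a constant, independent of `ħ`. -/
def isConstH (x : LS) : Prop := ∀ k : ℤ, k ≠ 0 → x.coeff k = 0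

/-- A matrix over `ℂ[ħ,ħ⁻¹]][[q]]` has entries in `ℂ[ħ][[q]]`. -/
def MatPolyH {r n : ℕ} (M : Matrix (Fin n) (Fin n) (AA r)) : Prop :=
  ∀ i j d, isPolyH (M i j d)

/-- A matrix over `ℂ[ħ,ħ⁻¹]][[q]]` has entries in `ℂ[[ħ⁻¹]][[q]]`. -/
def MatRegH {r n : ℕ} (M : Matrix (Fin n) (Fin n) (AA r)) : Prop :=
  ∀ i j d, isRegH (M i j d)

/-- A matrix over `ℂ[ħ,ħ⁻¹]][[q]]` has entries in `ℂ[[q]]`,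
i.e. is independent of `ħ`. -/
def MatConstH {r n : ℕ} (M : Matrix (Fin n) (Fin n) (AA r)) : Prop :=
  ∀ i j d, isConstH (M i j d)

/-- Flatness: `ħ(θ_aΩ_b − θ_bΩ_a) + Ω_aΩ_b − Ω_bΩ_a = 0` for all `a, b`. -/
def IsFlat {r n : ℕ} (Ω : Fin r → Matrix (Fin n) (Fin n) (AA r)) : Prop :=
  ∀ a b, hbarA r • (thetaMat a (Ω b) - thetaMat b (Ω a)) + (Ω a * Ω b - Ω b * Ω a) = 0

/-- Diagonal rescaling of a Laurent series: the coefficient of `ħ^{-k}`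
is multiplied by `f k`. -/
def scaleL (f : ℤ → ℂ) (x : LS) : LS :=
  ⟨fun k => f k * x.coeff k,
   x.isPWO_support'.mono (fun k hk => by
     simp only [Function.mem_support, ne_eq] at hk ⊢
     exact fun h => hk (by rw [h, mul_zero]))⟩

/-- Euler operator `E = 2ħ·∂/∂ħ + Σ_b w_b·θ_b`: on the monomial `ħ^j q^d`
(`= t^{-j} q^d`) it acts by multiplication by `2j + Σ_b w_b·d_b`. -/
def eulerA {r : ℕ} (w : Fin r → ℤ) (x : AA r) : AA r :=
  fun d => scaleL (fun k => (((∑ b, w b * (d b : ℤ)) - 2 * k : ℤ) : ℂ)) (x d)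

/-- The Euler operator acting entrywise on matrices. -/
def eulerMat {r n : ℕ} (w : Fin r → ℤ) (M : Matrix (Fin n) (Fin n) (AA r)) :
    Matrix (Fin n) (Fin n) (AA r) :=
  Matrix.of fun i j => eulerA w (M i j)

section FlatAux

open HahnSeries Finset

/-! ### Scaling operator on Laurent series -/

/-- `sc c` multiplies the coefficient of `t^k` by `c - 2k`. -/
def sc (c : ℤ) (x : LS) : LS := scaleL (fun k => ((c - 2 * k : ℤ) : ℂ)) x

lemma sc_coeff (c : ℤ) (x : LS) (k : ℤ) :
    (sc c x).coeff k = ((c - 2 * k : ℤ) : ℂ) * x.coeff k := rfl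

lemma sc_zero (c : ℤ) : sc c 0 = 0 := by
  ext k; simp [sc_coeff]

lemma sc_add (c : ℤ) (x y : LS) : sc c (x + y) = sc c x + sc c y := by
  ext k; simp [sc_coeff, mul_add]

/-- `sc c` as an additive monoid hom. -/
def scHom (c : ℤ) : LS →+ LS := ⟨⟨sc c, sc_zero c⟩, sc_add c⟩

lemma scHom_apply (c : ℤ) (x : LS) : scHom c x = sc c x := rfl

lemma sc_support (c : ℤ) (x : LS) : (sc c x).support ⊆ x.support := fun k hk => by
  simp only [HahnSeries.mem_support, sc_coeff] at hk ⊢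
  exact fun h => hk (by rw [h, mul_zero])

lemma sc_mul (c₁ c₂ : ℤ) (x y : LS) :
    sc (c₁ + c₂) (x * y) = sc c₁ x * y + x * sc c₂ y := by
  ext k
  rw [HahnSeries.coeff_add, sc_coeff, HahnSeries.coeff_mul,
    HahnSeries.coeff_mul_left' x.isPWO_support (sc_support c₁ x),
    HahnSeries.coeff_mul_right' y.isPWO_support (sc_support c₂ y),
    Finset.mul_sum, ← Finset.sum_add_distrib]
  refine Finset.sum_congr rfl fun q hq => ?_
  rw [Finset.mem_addAntidiagonal] at hq
  rw [sc_coeff, sc_coeff, ← hq.2.2]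
  push_cast
  ring

lemma hbar_mul_coeff (x : LS) (k : ℤ) : (hbarL * x).coeff k = x.coeff (k + 1) := by
  have h := HahnSeries.coeff_single_mul_add (r := (1 : ℂ)) (x := x) (a := k + 1) (b := (-1 : ℤ))
  simpa [hbarL] using h

lemma natmul_coeff (m : ℕ) (u : LS) (k : ℤ) : ((m : LS) * u).coeff k = (m : ℂ) * u.coeff k := by
  rw [← nsmul_eq_mul, HahnSeries.coeff_nsmul]
  simp [nsmul_eq_mul]

lemma sc_nathbar (m : ℕ) (c : ℤ) (x : LS) :
    sc c (((m : LS) * hbarL) * x) = ((m : LS) * hbarL) * sc (c + 2) x := by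
  ext k
  rw [sc_coeff, mul_assoc, natmul_coeff, hbar_mul_coeff, mul_assoc, natmul_coeff,
    hbar_mul_coeff, sc_coeff]
  push_cast
  ring

lemma sc_two (c : ℤ) (x : LS) : sc (c + 2) x = sc c x + x + x := by
  ext k
  simp only [HahnSeries.coeff_add, sc_coeff]
  push_cast
  ring

lemma sc_C (z : ℂ) : sc 0 (HahnSeries.C z) = 0 := by
  ext k
  rw [sc_coeff, HahnSeries.C_apply]
  rcases eq_or_ne k 0 with rfl | h
  · simp
  · rw [HahnSeries.coeff_single_of_ne h]; simp

lemma sc_one : sc 0 (1 : LS) = 0 := by rw [← HahnSeries.C_one]; exact sc_C 1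

/-- Coefficient extraction as an additive hom. -/
def coeffHom (k : ℤ) : LS →+ ℂ :=
  ⟨⟨fun x => x.coeff k, HahnSeries.coeff_zero⟩, fun x y => HahnSeries.coeff_add⟩

lemma coeff_sum {ι : Type*} (s : Finset ι) (f : ι → LS) (k : ℤ) :
    (∑ l ∈ s, f l).coeff k = ∑ l ∈ s, (f l).coeff k :=
  map_sum (coeffHom k) f s

end FlatAux
section FlatAux2

open HahnSeries Finset

variable {r n : ℕ}

/-- Entrywise embedding `ℂ → LS` of a matrix. -/
def mapC {n : ℕ} (P : Matrix (Fin n) (Fin n) ℂ) : Matrix (Fin n) (Fin n) LS :=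
  P.map (HahnSeries.C : ℂ →+* LS)

lemma mapC_apply (P : Matrix (Fin n) (Fin n) ℂ) (i j : Fin n) :
    mapC P i j = HahnSeries.C (P i j) := rfl

/-! ### Entrywise scaling on matrices over `LS` -/

/-- entrywise `sc`. -/
def scM (c : ℤ) (X : Matrix (Fin n) (Fin n) LS) : Matrix (Fin n) (Fin n) LS :=
  Matrix.of fun i j => sc c (X i j)

lemma scM_apply (c : ℤ) (X : Matrix (Fin n) (Fin n) LS) (i j : Fin n) :
    scM c X i j = sc c (X i j) := rfl

/-- `scM c` as an additive hom. -/
def scMHom (c : ℤ) : Matrix (Fin n) (Fin n) LS →+ Matrix (Fin n) (Fin n) LS where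
  toFun := scM c
  map_zero' := by
    refine Matrix.ext fun i j => ?_
    simpa [scM_apply] using sc_zero c
  map_add' X Y := by
    refine Matrix.ext fun i j => ?_
    simpa [scM_apply, Matrix.add_apply] using sc_add c (X i j) (Y i j)

lemma scM_add (c : ℤ) (X Y : Matrix (Fin n) (Fin n) LS) :
    scM c (X + Y) = scM c X + scM c Y := map_add (scMHom c) X Y

lemma scM_sub (c : ℤ) (X Y : Matrix (Fin n) (Fin n) LS) :
    scM c (X - Y) = scM c X - scM c Y := map_sub (scMHom c) X Y

lemma scM_sum (c : ℤ) {ι : Type*} (s : Finset ι) (f : ι → Matrix (Fin n) (Fin n) LS) :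
    scM c (∑ l ∈ s, f l) = ∑ l ∈ s, scM c (f l) := map_sum (scMHom c) f s

lemma scM_mul (c₁ c₂ : ℤ) (A B : Matrix (Fin n) (Fin n) LS) :
    scM (c₁ + c₂) (A * B) = scM c₁ A * B + A * scM c₂ B := by
  refine Matrix.ext fun i j => ?_
  simp only [scM_apply, Matrix.add_apply, Matrix.mul_apply]
  rw [show sc (c₁ + c₂) (∑ l, A i l * B l j) = ∑ l, sc (c₁ + c₂) (A i l * B l j) from
    map_sum (scHom (c₁ + c₂)) _ _, ← Finset.sum_add_distrib]
  exact Finset.sum_congr rfl fun l _ => sc_mul c₁ c₂ _ _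

lemma scM_hb (m : ℕ) (c : ℤ) (X : Matrix (Fin n) (Fin n) LS) :
    scM c ((((m : LS)) * hbarL) • X) = (((m : LS)) * hbarL) • scM (c + 2) X := by
  refine Matrix.ext fun i j => ?_
  simp only [scM_apply, Matrix.smul_apply, smul_eq_mul]
  exact sc_nathbar m c (X i j)

lemma scM_two (c : ℤ) (X : Matrix (Fin n) (Fin n) LS) :
    scM (c + 2) X = scM c X + X + X := by
  refine Matrix.ext fun i j => ?_
  simp only [scM_apply, Matrix.add_apply]
  exact sc_two c (X i j)

lemma scM_mapC (P : Matrix (Fin n) (Fin n) ℂ) : scM 0 (mapC P) = 0 := by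
  refine Matrix.ext fun i j => ?_
  simpa [scM_apply, mapC_apply] using sc_C (P i j)

lemma scM_one : scM 0 (1 : Matrix (Fin n) (Fin n) LS) = 0 := by
  have h : mapC (1 : Matrix (Fin n) (Fin n) ℂ) = 1 :=
    Matrix.map_one _ (map_zero _) (map_one _)
  rw [← h]
  exact scM_mapC 1

lemma coeff_constL (P : Matrix (Fin n) (Fin n) ℂ) (Y : Matrix (Fin n) (Fin n) LS)
    (i j : Fin n) (k : ℤ) :
    ((mapC P * Y) i j).coeff k = ∑ l, P i l * (Y l j).coeff k := by
  rw [Matrix.mul_apply, coeff_sum]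
  refine Finset.sum_congr rfl fun l _ => ?_
  rw [mapC_apply, HahnSeries.C_mul_eq_smul, HahnSeries.coeff_smul, smul_eq_mul]

lemma coeff_constR (P : Matrix (Fin n) (Fin n) ℂ) (Y : Matrix (Fin n) (Fin n) LS)
    (i j : Fin n) (k : ℤ) :
    ((Y * mapC P) i j).coeff k = ∑ l, (Y i l).coeff k * P l j := by
  rw [Matrix.mul_apply, coeff_sum]
  refine Finset.sum_congr rfl fun l _ => ?_
  rw [mapC_apply, HahnSeries.C_apply, HahnSeries.coeff_mul_single_zero]

end FlatAux2
section FlatAux3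

open HahnSeries Finset

variable {n : ℕ}

lemma matrix_eq_zero_of_rec (m : ℕ) (hm : m ≠ 0) (P : Matrix (Fin n) (Fin n) ℂ)
    (X : Matrix (Fin n) (Fin n) LS)
    (h : (((m : LS)) * hbarL) • X + mapC P * X - X * mapC P = 0) :
    X = 0 := by
  classical
  by_contra hX
  have hFne : (Finset.univ.filter fun q : Fin n × Fin n => X q.1 q.2 ≠ 0).Nonempty := by
    by_contra hF
    rw [Finset.not_nonempty_iff_eq_empty, Finset.filter_eq_empty_iff] at hF
    exact hX (Matrix.ext fun i j => by
      have h2 := hF (Finset.mem_univ (i, j))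
      rw [not_not] at h2
      simpa [Matrix.zero_apply] using h2)
  set F := Finset.univ.filter fun q : Fin n × Fin n => X q.1 q.2 ≠ 0 with hF
  set k0 : ℤ := (F.image fun q => (X q.1 q.2).order).min' (hFne.image _) with hk0
  have hlow : ∀ (i j : Fin n) (k : ℤ), k < k0 → (X i j).coeff k = 0 := by
    intro i j k hk
    rcases eq_or_ne (X i j) 0 with h0 | h0
    · simp [h0]
    · apply HahnSeries.coeff_eq_zero_of_lt_order
      have hmemF : (i, j) ∈ F := by
        rw [hF]; exact Finset.mem_filter.mpr ⟨Finset.mem_univ _, h0⟩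
      have hmem : (X i j).order ∈ F.image fun q => (X q.1 q.2).order :=
        Finset.mem_image_of_mem (fun q : Fin n × Fin n => (X q.1 q.2).order) hmemF
      exact lt_of_lt_of_le hk (Finset.min'_le _ _ hmem)
  have hcoeff : ∀ i j : Fin n, (X i j).coeff k0 = 0 := by
    intro i j
    have h0 := congrArg (fun M : Matrix (Fin n) (Fin n) LS => (M i j).coeff (k0 - 1)) h
    simp only [Matrix.add_apply, Matrix.sub_apply, Matrix.smul_apply, Matrix.zero_apply,
      HahnSeries.coeff_add, HahnSeries.coeff_sub, HahnSeries.coeff_zero, smul_eq_mul] at h0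
    rw [coeff_constL, coeff_constR, mul_assoc, natmul_coeff, hbar_mul_coeff,
      Finset.sum_eq_zero fun l _ => by rw [hlow _ _ _ (by omega), mul_zero],
      Finset.sum_eq_zero fun l _ => by rw [hlow _ _ _ (by omega), zero_mul],
      show k0 - 1 + 1 = k0 by ring] at h0
    have h1 : (m : ℂ) * (X i j).coeff k0 = 0 := by simpa using h0
    rcases mul_eq_zero.mp h1 with h2 | h2
    · exact absurd h2 (by exact_mod_cast hm)
    · exact h2
  obtain ⟨q, hqF, hqord⟩ := Finset.mem_image.mp
    (Finset.min'_mem (F.image fun q => (X q.1 q.2).order) (hFne.image _))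
  have hqne : X q.1 q.2 ≠ 0 := (Finset.mem_filter.mp hqF).2
  exact (HahnSeries.coeff_order_eq_zero.not.2 hqne) (by rw [hqord, ← hk0]; exact hcoeff q.1 q.2)

lemma finite_k (μ : Matrix (Fin n) (Fin n) ℂ) (c : ℤ)
    (X : ℤ → Matrix (Fin n) (Fin n) ℂ)
    (hX : ∀ k, ((c - 2 * k : ℤ) : ℂ) • X k + μ * X k - X k * μ = 0) :
    {k : ℤ | X k ≠ 0}.Finite := by
  set f : Module.End ℂ (Matrix (Fin n) (Fin n) ℂ) :=
    LinearMap.mulLeft ℂ μ - LinearMap.mulRight ℂ μ with hf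
  have hsub : {k : ℤ | X k ≠ 0} ⊆
      (fun k : ℤ => ((2 * k - c : ℤ) : ℂ)) ⁻¹' (setOf f.HasEigenvalue) := by
    intro k hk
    simp only [Set.mem_preimage, Set.mem_setOf_eq]
    refine Module.End.hasEigenvalue_of_hasEigenvector
      ⟨Module.End.mem_eigenspace_iff.2 ?_, hk⟩
    have h := hX k
    simp only [hf, LinearMap.sub_apply, LinearMap.mulLeft_apply, LinearMap.mulRight_apply]
    have heq : μ * X k - X k * μ = -(((c - 2 * k : ℤ) : ℂ) • X k) := by
      rw [eq_neg_iff_add_eq_zero, add_comm, ← add_sub_assoc]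
      exact h
    rw [heq, ← neg_smul]
    congr 1
    push_cast
    ring
  refine Set.Finite.subset (Set.Finite.preimage ?_ (Module.End.finite_hasEigenvalue f)) hsub
  intro a _ b _ hab
  have : ((2 * a - c : ℤ) : ℂ) = ((2 * b - c : ℤ) : ℂ) := hab
  have h2 : (2 * a - c : ℤ) = (2 * b - c : ℤ) := by exact_mod_cast this
  omega

end FlatAux3
section FlatAux4

open HahnSeries Finset

variable {r n : ℕ}

/-- The matrix of `q^d`-coefficients. -/
def MC (M : Matrix (Fin n) (Fin n) (AA r)) (d : Fin r →₀ ℕ) : Matrix (Fin n) (Fin n) LS :=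
  Matrix.of fun i j => M i j d

lemma MC_apply (M : Matrix (Fin n) (Fin n) (AA r)) (d : Fin r →₀ ℕ) (i j : Fin n) :
    MC M d i j = M i j d := rfl

lemma ev_sum {ι : Type*} (s : Finset ι) (f : ι → AA r) (d : Fin r →₀ ℕ) :
    (∑ l ∈ s, f l) d = ∑ l ∈ s, f l d :=
  map_sum (MvPowerSeries.coeff d) f s

lemma ev_mul (x y : AA r) (d : Fin r →₀ ℕ) :
    (x * y) d = ∑ q ∈ Finset.HasAntidiagonal.antidiagonal d, x q.1 * y q.2 :=
  MvPowerSeries.coeff_mul d x y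

lemma MC_add (A B : Matrix (Fin n) (Fin n) (AA r)) (d : Fin r →₀ ℕ) :
    MC (A + B) d = MC A d + MC B d := rfl

lemma MC_sub (A B : Matrix (Fin n) (Fin n) (AA r)) (d : Fin r →₀ ℕ) :
    MC (A - B) d = MC A d - MC B d := rfl

lemma MC_zero (d : Fin r →₀ ℕ) : MC (0 : Matrix (Fin n) (Fin n) (AA r)) d = 0 := rfl

lemma MC_mul (M N : Matrix (Fin n) (Fin n) (AA r)) (d : Fin r →₀ ℕ) :
    MC (M * N) d = ∑ q ∈ Finset.HasAntidiagonal.antidiagonal d, MC M q.1 * MC N q.2 := by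
  refine Matrix.ext fun i j => ?_
  rw [MC_apply, Matrix.mul_apply, ev_sum]
  rw [Finset.sum_congr rfl fun l (_ : l ∈ Finset.univ) => ev_mul (M i l) (N l j) d,
    Finset.sum_comm]
  show _ = (∑ q ∈ Finset.HasAntidiagonal.antidiagonal d, MC M q.1 * MC N q.2) i j
  rw [Matrix.sum_apply]
  refine Finset.sum_congr rfl fun q _ => ?_
  rw [Matrix.mul_apply]
  rfl

lemma MC_hbarTheta (a : Fin r) (M : Matrix (Fin n) (Fin n) (AA r)) (d : Fin r →₀ ℕ) :
    MC (hbarA r • thetaMat a M) d = (((d a : ℕ) : LS) * hbarL) • MC M d := by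
  refine Matrix.ext fun i j => ?_
  rw [MC_apply, Matrix.smul_apply, Matrix.smul_apply, smul_eq_mul, smul_eq_mul]
  have h1 : (hbarA r * thetaMat a M i j) d = hbarL * (thetaMat a M i j) d :=
    MvPowerSeries.coeff_C_mul d (thetaMat a M i j) hbarL
  rw [h1]
  have h2 : thetaMat a M i j = thetaA a (M i j) := rfl
  rw [h2]
  have h3 : thetaA a (M i j) d = ((d a : ℕ) : LS) * M i j d := rfl
  rw [h3, MC_apply]
  ring

lemma MC_euler (w : Fin r → ℤ) (M : Matrix (Fin n) (Fin n) (AA r)) (d : Fin r →₀ ℕ) :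
    MC (eulerMat w M) d = scM (∑ b, w b * (d b : ℤ)) (MC M d) := rfl

lemma cA_apply (z : ℂ) (d : Fin r →₀ ℕ) :
    (cA r z) d = if d = 0 then HahnSeries.C z else 0 := by
  show MvPowerSeries.coeff d (MvPowerSeries.C (σ := Fin r) (R := LS) (HahnSeries.C z)) = _
  exact MvPowerSeries.coeff_C d (HahnSeries.C z)

lemma cA_apply_zero (z : ℂ) : (cA r z) 0 = HahnSeries.C z := by
  rw [cA_apply]; simp

lemma cA_apply_ne (z : ℂ) (d : Fin r →₀ ℕ) (hd : d ≠ 0) : (cA r z) d = 0 := by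
  rw [cA_apply, if_neg hd]

lemma MC_mapC_zero (P : Matrix (Fin n) (Fin n) ℂ) :
    MC (P.map (cA r)) 0 = mapC P := by
  refine Matrix.ext fun i j => ?_
  rw [MC_apply, Matrix.map_apply, mapC_apply]
  exact cA_apply_zero (P i j)

lemma MC_mapC_ne (P : Matrix (Fin n) (Fin n) ℂ) (d : Fin r →₀ ℕ) (hd : d ≠ 0) :
    MC (P.map (cA r)) d = 0 := by
  refine Matrix.ext fun i j => ?_
  rw [MC_apply, Matrix.map_apply]
  simpa [Matrix.zero_apply] using cA_apply_ne (P i j) d hd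

lemma MC_mul_constR (M : Matrix (Fin n) (Fin n) (AA r)) (P : Matrix (Fin n) (Fin n) ℂ)
    (d : Fin r →₀ ℕ) : MC (M * P.map (cA r)) d = MC M d * mapC P := by
  classical
  rw [MC_mul]
  rw [Finset.sum_eq_single_of_mem (d, 0)
    (Finset.HasAntidiagonal.mem_antidiagonal.mpr (add_zero d)) ?_]
  · rw [MC_mapC_zero]
  · rintro ⟨q1, q2⟩ hq hne
    rcases eq_or_ne q2 0 with rfl | hq2
    · refine absurd ?_ hne
      have h5 := Finset.HasAntidiagonal.mem_antidiagonal.mp hq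
      rw [add_zero] at h5
      exact Prod.ext h5 rfl
    · rw [MC_mapC_ne P q2 hq2, mul_zero]

lemma MC_mul_constL (M : Matrix (Fin n) (Fin n) (AA r)) (P : Matrix (Fin n) (Fin n) ℂ)
    (d : Fin r →₀ ℕ) : MC (P.map (cA r) * M) d = mapC P * MC M d := by
  classical
  rw [MC_mul]
  rw [Finset.sum_eq_single_of_mem (0, d)
    (Finset.HasAntidiagonal.mem_antidiagonal.mpr (zero_add d)) ?_]
  · rw [MC_mapC_zero]
  · rintro ⟨q1, q2⟩ hq hne
    rcases eq_or_ne q1 0 with rfl | hq1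
    · refine absurd ?_ hne
      have h5 := Finset.HasAntidiagonal.mem_antidiagonal.mp hq
      rw [zero_add] at h5
      exact Prod.ext rfl h5
    · rw [MC_mapC_ne P q1 hq1, zero_mul]

end FlatAux4
section FlatAux5

variable {r n : ℕ}

/-- total degree weight -/
def cwt (w : Fin r → ℤ) (d : Fin r →₀ ℕ) : ℤ := ∑ b, w b * (d b : ℤ)

lemma MC_euler' (w : Fin r → ℤ) (M : Matrix (Fin n) (Fin n) (AA r)) (d : Fin r →₀ ℕ) :
    MC (eulerMat w M) d = scM (cwt w d) (MC M d) := rfl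

lemma cwt_split (w : Fin r → ℤ) {d : Fin r →₀ ℕ} {q : (Fin r →₀ ℕ) × (Fin r →₀ ℕ)}
    (hq : q ∈ Finset.HasAntidiagonal.antidiagonal d) : cwt w d = cwt w q.1 + cwt w q.2 := by
  have h5 := Finset.HasAntidiagonal.mem_antidiagonal.mp hq
  rw [← h5]
  simp [cwt, Finsupp.add_apply, mul_add, Finset.sum_add_distrib]

lemma cwt_zero (w : Fin r → ℤ) : cwt w 0 = 0 := by simp [cwt]

/-- The matrix `E(S) + [μ, S]` read off coefficientwise in `q`. -/
def Tm (w : Fin r → ℤ) (μ : Matrix (Fin n) (Fin n) ℂ)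
    (S : Matrix (Fin n) (Fin n) (AA r)) (d : Fin r →₀ ℕ) : Matrix (Fin n) (Fin n) LS :=
  scM (cwt w d) (MC S d) + mapC μ * MC S d - MC S d * mapC μ

end FlatAux5

set_option maxHeartbeats 1000000 in
/-- **The flat section in the graded case** (graded Proposition of §3.3).
If the flat connection matrices `Ω_a ∈ Mat_n(ℂ[ħ][[q]])` (with `Ω_a|_{q=0}`
independent of `ħ`) have degree 2, i.e. `E(Ω_a) + [μ, Ω_a] = 2Ω_a` for the
Euler operator `E = 2ħ∂/∂ħ + Σ_b w_b θ_b` and a degree matrix `μ ∈ Mat_n(ℂ)`,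
then the unique flat section `S` (with `S|_{q=0} = Id` and
`ħθ_a S + Ω_a S − S p_a = 0`) satisfies `E(S) + [μ, S] = 0`, and each
`q`-coefficient of `S` is a Laurent polynomial in `ħ`. -/
theorem flat_section_graded {r n : ℕ} (hr : 1 ≤ r) (hn : 1 ≤ n)
    (Ω : Fin r → Matrix (Fin n) (Fin n) (AA r))
    (hpoly : ∀ a, MatPolyH (Ω a))
    (hflat : IsFlat Ω)
    (p : Fin r → Matrix (Fin n) (Fin n) ℂ)
    (hp : ∀ a i j, ccA (Ω a i j) = HahnSeries.C (p a i j))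
    (μ : Matrix (Fin n) (Fin n) ℂ) (w : Fin r → ℤ)
    (hgrade : ∀ a, eulerMat w (Ω a) + μ.map (cA r) * Ω a - Ω a * μ.map (cA r)
      = Ω a + Ω a)
    (S : Matrix (Fin n) (Fin n) (AA r))
    (hScc : S.map ccA = 1)
    (hSeq : ∀ a, hbarA r • thetaMat a S + Ω a * S - S * (p a).map (cA r) = 0) :
    eulerMat w S + μ.map (cA r) * S - S * μ.map (cA r) = 0 ∧
    ∀ i j d, ((S i j d).support).Finite := by
  classical
  -- coefficientwise versions of the hypotheses
  have h0 : ∀ a d, (((d a : ℕ) : LS) * hbarL) • MC S d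
      + ∑ q ∈ Finset.HasAntidiagonal.antidiagonal d, MC (Ω a) q.1 * MC S q.2
      - MC S d * mapC (p a) = 0 := by
    intro a d
    have h := congrArg (fun M => MC M d) (hSeq a)
    simp only [MC_sub, MC_add, MC_zero] at h
    rw [MC_hbarTheta, MC_mul, MC_mul_constR] at h
    exact h
  have hg : ∀ a d, scM (cwt w d) (MC (Ω a) d) + mapC μ * MC (Ω a) d - MC (Ω a) d * mapC μ
      = MC (Ω a) d + MC (Ω a) d := by
    intro a d
    have h := congrArg (fun M => MC M d) (hgrade a)
    simp only [MC_sub, MC_add] at h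
    rw [MC_euler', MC_mul_constR, MC_mul_constL] at h
    exact h
  have hΩ0 : ∀ a, MC (Ω a) 0 = mapC (p a) := by
    intro a
    refine Matrix.ext fun i j => ?_
    rw [MC_apply, mapC_apply]
    exact hp a i j
  have hcommP : ∀ a, mapC μ * mapC (p a) - mapC (p a) * mapC μ
      = mapC (p a) + mapC (p a) := by
    intro a
    have h := hg a 0
    rw [hΩ0, cwt_zero, scM_mapC, zero_add] at h
    exact h
  have hS0 : MC S 0 = 1 := by
    refine Matrix.ext fun i j => ?_
    rw [MC_apply]
    have h := congrArg (fun M : Matrix (Fin n) (Fin n) LS => M i j) hScc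
    rw [show S i j 0 = ccA (S i j) from rfl]
    simpa [Matrix.map_apply] using h
  have hT0 : Tm w μ S 0 = 0 := by
    rw [Tm, hS0, cwt_zero, scM_one, mul_one, one_mul]
    abel
  have star : ∀ a d, (((d a : ℕ) : LS) * hbarL) • Tm w μ S d
      + ∑ q ∈ Finset.HasAntidiagonal.antidiagonal d, MC (Ω a) q.1 * Tm w μ S q.2
      - Tm w μ S d * mapC (p a) = 0 := by
    intro a d
    have hTd : Tm w μ S d
        = scM (cwt w d) (MC S d) + mapC μ * MC S d - MC S d * mapC μ := rfl
    set z : LS := ((d a : ℕ) : LS) * hbarL with hz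
    set H : Matrix (Fin n) (Fin n) LS := z • (1 : Matrix (Fin n) (Fin n) LS) with hH0
    have hH : ∀ Y : Matrix (Fin n) (Fin n) LS, z • Y = H * Y := fun Y =>
      ((Matrix.smul_mul z 1 Y).trans (congrArg (fun W => z • W) (one_mul Y))).symm
    have hHc : ∀ Y : Matrix (Fin n) (Fin n) LS, H * Y = Y * H := fun Y => by
      rw [← hH Y]
      exact ((Matrix.mul_smul Y z 1).trans (congrArg (fun W => z • W) (mul_one Y))).symm
    have hscMH : scM (cwt w d) (H * MC S d)
        = H * (scM (cwt w d) (MC S d) + MC S d + MC S d) := by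
      rw [← hH (MC S d), ← hH (scM (cwt w d) (MC S d) + MC S d + MC S d), ← scM_two]
      exact scM_hb (d a) (cwt w d) (MC S d)
    have hμH : mapC μ * H = H * mapC μ := (hHc (mapC μ)).symm
    have hΦ1 : scM (cwt w d) (z • MC S d)
        + mapC μ * (z • MC S d) - (z • MC S d) * mapC μ
        = z • Tm w μ S d + (z • MC S d + z • MC S d) := by
      rw [hH (MC S d), hH (Tm w μ S d), hscMH, hTd]
      have e1 : mapC μ * (H * MC S d) = H * (mapC μ * MC S d) := by
        rw [← mul_assoc, hμH, mul_assoc]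
      rw [e1, mul_assoc H (MC S d) (mapC μ)]
      simp only [mul_add, mul_sub]
      abel
    have hΦ2 : scM (cwt w d) (∑ q ∈ Finset.HasAntidiagonal.antidiagonal d, MC (Ω a) q.1 * MC S q.2)
        + mapC μ * (∑ q ∈ Finset.HasAntidiagonal.antidiagonal d, MC (Ω a) q.1 * MC S q.2)
        - (∑ q ∈ Finset.HasAntidiagonal.antidiagonal d, MC (Ω a) q.1 * MC S q.2) * mapC μ
        = (∑ q ∈ Finset.HasAntidiagonal.antidiagonal d, MC (Ω a) q.1 * Tm w μ S q.2)
          + ((∑ q ∈ Finset.HasAntidiagonal.antidiagonal d, MC (Ω a) q.1 * MC S q.2)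
             + (∑ q ∈ Finset.HasAntidiagonal.antidiagonal d, MC (Ω a) q.1 * MC S q.2)) := by
      rw [scM_sum, Finset.mul_sum, Finset.sum_mul, ← Finset.sum_add_distrib,
        ← Finset.sum_sub_distrib, ← Finset.sum_add_distrib, ← Finset.sum_add_distrib]
      refine Finset.sum_congr rfl fun q hq => ?_
      rw [cwt_split w hq, scM_mul]
      have hA : scM (cwt w q.1) (MC (Ω a) q.1) =
          (MC (Ω a) q.1 + MC (Ω a) q.1)
            - (mapC μ * MC (Ω a) q.1 - MC (Ω a) q.1 * mapC μ) := by
        rw [← hg a q.1]; abel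
      have hTq : Tm w μ S q.2
          = scM (cwt w q.2) (MC S q.2) + mapC μ * MC S q.2 - MC S q.2 * mapC μ := rfl
      rw [hA, hTq]
      simp only [sub_mul, add_mul, mul_sub, mul_add, mul_assoc]
      abel
    have hscM3 : scM (cwt w d) (MC S d * mapC (p a))
        = scM (cwt w d) (MC S d) * mapC (p a) := by
      have h := scM_mul (cwt w d) 0 (MC S d) (mapC (p a))
      rw [add_zero, scM_mapC, mul_zero, add_zero] at h
      exact h
    have hcomm3 : mapC (p a) * mapC μ
        = mapC μ * mapC (p a) - (mapC (p a) + mapC (p a)) := by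
      rw [← hcommP a]; abel
    have hΦ3 : scM (cwt w d) (MC S d * mapC (p a)) + mapC μ * (MC S d * mapC (p a))
        - (MC S d * mapC (p a)) * mapC μ
        = Tm w μ S d * mapC (p a) + (MC S d * mapC (p a) + MC S d * mapC (p a)) := by
      rw [hscM3, hTd]
      simp only [mul_assoc]
      rw [hcomm3]
      simp only [sub_mul, add_mul, mul_sub, mul_add, mul_assoc]
      abel
    have hA3eq : MC S d * mapC (p a)
        = z • MC S d
          + ∑ q ∈ Finset.HasAntidiagonal.antidiagonal d, MC (Ω a) q.1 * MC S q.2 :=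
      (sub_eq_zero.mp (h0 a d)).symm
    have eA : scM (cwt w d) (MC S d * mapC (p a)) + mapC μ * (MC S d * mapC (p a))
        - (MC S d * mapC (p a)) * mapC μ
        = (z • Tm w μ S d + (z • MC S d + z • MC S d))
          + ((∑ q ∈ Finset.HasAntidiagonal.antidiagonal d, MC (Ω a) q.1 * Tm w μ S q.2)
             + ((∑ q ∈ Finset.HasAntidiagonal.antidiagonal d, MC (Ω a) q.1 * MC S q.2)
                + (∑ q ∈ Finset.HasAntidiagonal.antidiagonal d, MC (Ω a) q.1 * MC S q.2))) := by
      rw [hA3eq, scM_add, mul_add, add_mul, ← hΦ1, ← hΦ2]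
      abel
    have eB := hΦ3.symm.trans eA
    rw [hA3eq] at eB
    rw [sub_eq_zero]
    calc z • Tm w μ S d
          + ∑ q ∈ Finset.HasAntidiagonal.antidiagonal d, MC (Ω a) q.1 * Tm w μ S q.2
        = (z • Tm w μ S d
            + (z • MC S d + z • MC S d))
          + ((∑ q ∈ Finset.HasAntidiagonal.antidiagonal d, MC (Ω a) q.1 * Tm w μ S q.2)
             + ((∑ q ∈ Finset.HasAntidiagonal.antidiagonal d, MC (Ω a) q.1 * MC S q.2)
                + (∑ q ∈ Finset.HasAntidiagonal.antidiagonal d, MC (Ω a) q.1 * MC S q.2)))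
          - ((z • MC S d
              + ∑ q ∈ Finset.HasAntidiagonal.antidiagonal d, MC (Ω a) q.1 * MC S q.2)
             + (z • MC S d
              + ∑ q ∈ Finset.HasAntidiagonal.antidiagonal d, MC (Ω a) q.1 * MC S q.2)) := by abel
      _ = Tm w μ S d * mapC (p a) := by rw [← eB]; abel
  -- strong induction on total degree
  have key : ∀ N, ∀ d : Fin r →₀ ℕ, (∑ b, d b) ≤ N → Tm w μ S d = 0 := by
    intro N
    induction N with
    | zero =>
      intro d hd
      have hd0 : d = 0 := by
        ext b
        exact Finset.sum_eq_zero_iff.mp (Nat.le_zero.mp hd) b (Finset.mem_univ b)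
      rw [hd0]
      exact hT0
    | succ N ih =>
      intro d hd
      rcases eq_or_ne d 0 with rfl | hd0
      · exact hT0
      · obtain ⟨a, ha⟩ : ∃ a, d a ≠ 0 := by
          by_contra hall
          push_neg at hall
          exact hd0 (Finsupp.ext fun b => hall b)
        have hstar := star a d
        have hcollapse : ∑ q ∈ Finset.HasAntidiagonal.antidiagonal d, MC (Ω a) q.1 * Tm w μ S q.2
            = mapC (p a) * Tm w μ S d := by
          rw [Finset.sum_eq_single_of_mem (0, d)
            (Finset.HasAntidiagonal.mem_antidiagonal.mpr (zero_add d)) ?_]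
          · rw [hΩ0]
          · rintro ⟨q1, q2⟩ hq hne
            have hq12 := Finset.HasAntidiagonal.mem_antidiagonal.mp hq
            have hq1 : q1 ≠ 0 := by
              rintro rfl
              rw [zero_add] at hq12
              exact hne (Prod.ext rfl hq12)
            have hw2 : (∑ b, q2 b) ≤ N := by
              have hsplit : (∑ b, d b) = (∑ b, q1 b) + (∑ b, q2 b) := by
                rw [← hq12]
                simp [Finsupp.add_apply, Finset.sum_add_distrib]
              have hpos : 1 ≤ ∑ b, q1 b := by
                obtain ⟨b, hb⟩ : ∃ b, q1 b ≠ 0 := by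
                  by_contra hall
                  push_neg at hall
                  exact hq1 (Finsupp.ext fun b => hall b)
                calc 1 ≤ q1 b := Nat.one_le_iff_ne_zero.mpr hb
                  _ ≤ ∑ b, q1 b :=
                    Finset.single_le_sum (fun _ _ => Nat.zero_le _) (Finset.mem_univ b)
              omega
            rw [ih q2 hw2, mul_zero]
        rw [hcollapse] at hstar
        exact matrix_eq_zero_of_rec (d a) ha (p a) (Tm w μ S d) hstar
  have keyT : ∀ d, Tm w μ S d = 0 := fun d => key (∑ b, d b) d le_rfl
  constructor
  · -- E(S) + [μ, S] = 0
    refine Matrix.ext fun i j => ?_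
    funext d
    have hMC : MC (eulerMat w S + μ.map (cA r) * S - S * μ.map (cA r)) d = Tm w μ S d := by
      rw [MC_sub, MC_add, MC_euler', MC_mul_constL, MC_mul_constR]
      rfl
    have h := congrArg (fun Y : Matrix (Fin n) (Fin n) LS => Y i j) (hMC.trans (keyT d))
    refine Eq.trans ?_ (rfl : (0 : LS) = _)
    simpa [MC_apply, Matrix.zero_apply] using h
  · -- Laurent-polynomiality
    intro i j d
    have hXeq : ∀ k : ℤ, ((cwt w d - 2 * k : ℤ) : ℂ) •
          (Matrix.of fun i' j' => (S i' j' d).coeff k : Matrix (Fin n) (Fin n) ℂ)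
        + μ * (Matrix.of fun i' j' => (S i' j' d).coeff k)
        - (Matrix.of fun i' j' => (S i' j' d).coeff k) * μ = 0 := by
      intro k
      refine Matrix.ext fun i' j' => ?_
      have h := congrArg (fun Y : Matrix (Fin n) (Fin n) LS => (Y i' j').coeff k) (keyT d)
      simp only [Tm, Matrix.add_apply, Matrix.sub_apply, HahnSeries.coeff_add,
        HahnSeries.coeff_sub, Matrix.zero_apply, HahnSeries.coeff_zero] at h
      rw [coeff_constL, coeff_constR] at h
      simp only [scM_apply, MC_apply, sc_coeff] at h
      simp only [Matrix.add_apply, Matrix.sub_apply, Matrix.smul_apply, Matrix.mul_apply,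
        Matrix.of_apply, Matrix.zero_apply, smul_eq_mul]
      exact h
    have hfin := finite_k μ (cwt w d)
      (fun k => Matrix.of fun i' j' => (S i' j' d).coeff k) hXeq
    refine Set.Finite.subset hfin ?_
    intro k hk
    simp only [Set.mem_setOf_eq]
    intro hzero
    apply hk
    have h := congrArg (fun Y : Matrix (Fin n) (Fin n) ℂ => Y i j) hzero
    simpa [Matrix.of_apply, Matrix.zero_apply] using h
end
end

section
/- Let Ω_1,…,Ω_r ∈ Mat_n(ℂ[[q^1,…,q^r]]) (independent of ħ) be flat, set p_a := Ω_a|_{q=0}, and let B be a symmetric bilinear form on ℂ^n with B(p_a v, w) = B(v, p_a w) for all a and all v, w. Let S ∈ Mat_n(ℂ[[ħ^{-1}]][[q]]) be the unique matrix with S|_{q=0} = Id and ħθ_a S + Ω_a S − S p_a = 0 for all a, and let S̄ ∈ Mat_n(ℂ[[ħ^{-1}]][[q]]) be obtained from S by replacing ħ by −ħ. Then the following are equivalent: (1) B(Ω_a v, w) = B(v, Ω_a w) for all a and all v, w ∈ ℂ^n, as identities in ℂ[[q]]; (3) B(S̄ v, S w) = B(v, w) for all v, w ∈ ℂ^n,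 as identities in ℂ[[ħ^{-1}]][[q]], where B is extended bilinearly over ℂ[[ħ^{-1}]][[q]]. -/
/-!
Work over ℂ.  We represent the coefficient ring `ℂ[ħ,ħ⁻¹]]` (formal Laurent
series `Σ_{k ≤ K} c_k ħ^k` with finitely many positive powers of `ħ`) as
`LaurentSeries ℂ` in the variable `t = ħ⁻¹`; thus the coefficient of `t^k`
is the coefficient of `ħ^{-k}`.  `AA r = ℂ[ħ,ħ⁻¹]][[q¹,…,qʳ]]`, and
`θ_a = qᵃ·∂/∂qᵃ` is the logarithmic partial derivative.
-/

noncomputable section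

/-- The substitution `ħ ↦ −ħ` on `ℂ[ħ,ħ⁻¹]]`. -/
def barL (x : LS) : LS := scaleL (fun k => (-1 : ℂ) ^ k) x

/-- The substitution `ħ ↦ −ħ` on matrices over `ℂ[ħ,ħ⁻¹]][[q]]`. -/
def barMat {r n : ℕ} (M : Matrix (Fin n) (Fin n) (AA r)) :
    Matrix (Fin n) (Fin n) (AA r) :=
  Matrix.of fun i j => (fun d => barL (M i j d) : AA r)

lemma barL_coeff (x : LS) (k : ℤ) : (barL x).coeff k = (-1 : ℂ) ^ k * x.coeff k := rfl

lemma barL_support (x : LS) : (barL x).support ⊆ x.support := by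
  intro k hk
  have hk' : (barL x).coeff k ≠ 0 := hk
  have : x.coeff k ≠ 0 := fun h => hk' (by rw [barL_coeff, h, mul_zero])
  exact this

lemma barL_add (x y : LS) : barL (x + y) = barL x + barL y := by
  ext k
  simp [barL_coeff, HahnSeries.coeff_add, mul_add]

lemma barL_mul (x y : LS) : barL (x * y) = barL x * barL y := by
  ext k
  have hsub : Finset.antidiagonal (barL x).isPWO_support (barL y).isPWO_support k ⊆
      Finset.antidiagonal x.isPWO_support y.isPWO_support k :=
    Finset.Subset.trans (Finset.antidiagonal_mono_left (barL_support x))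
      (Finset.antidiagonal_mono_right (barL_support y))
  rw [barL_coeff, HahnSeries.coeff_mul, HahnSeries.coeff_mul, Finset.mul_sum,
    ← Finset.sum_subset hsub]
  · refine Finset.sum_congr rfl ?_
    rintro ⟨i, j⟩ hij
    rw [Finset.mem_addAntidiagonal] at hij
    simp only [barL_coeff]
    rw [← hij.2.2, zpow_add₀ (by norm_num : (-1 : ℂ) ≠ 0)]
    ring
  · rintro ⟨i, j⟩ hij hnij
    exfalso
    apply hnij
    rw [Finset.mem_addAntidiagonal] at hij ⊢
    refine ⟨?_, ?_, hij.2.2⟩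
    · simp only [Function.mem_support, barL_coeff, ne_eq]
      exact mul_ne_zero (zpow_ne_zero _ (by norm_num)) hij.1
    · simp only [Function.mem_support, barL_coeff, ne_eq]
      exact mul_ne_zero (zpow_ne_zero _ (by norm_num)) hij.2.1

lemma barL_one : barL 1 = 1 := by
  ext k
  rw [barL_coeff]
  by_cases h : k = 0
  · subst h; simp
  · rw [HahnSeries.coeff_one]; simp [h]

/-- `ħ ↦ -ħ` as a ring homomorphism of `LS`. -/
def barR : LS →+* LS where
  toFun := barL
  map_one' := barL_one
  map_mul' := barL_mul
  map_zero' := by ext k; simp [barL_coeff]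
  map_add' := barL_add

lemma barR_const {x : LS} (hx : isConstH x) : barR x = x := by
  ext k
  by_cases h : k = 0
  · subst h; show (-1:ℂ)^(0:ℤ) * _ = _; simp
  · show (-1:ℂ)^k * x.coeff k = x.coeff k
    rw [hx k h, mul_zero]

lemma isConstH_C (c : ℂ) : isConstH (HahnSeries.C c) := by
  intro k hk
  rw [HahnSeries.C_apply, HahnSeries.coeff_single_of_ne hk]

lemma barR_C (c : ℂ) : barR (HahnSeries.C c) = HahnSeries.C c :=
  barR_const (isConstH_C c)

lemma barR_hbarL : barR hbarL = - hbarL := by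
  ext k
  show (-1:ℂ)^k * hbarL.coeff k = (-hbarL).coeff k
  rw [HahnSeries.coeff_neg]
  by_cases h : k = (-1 : ℤ)
  · subst h
    rw [hbarL, HahnSeries.coeff_single_same]
    norm_num
  · rw [hbarL, HahnSeries.coeff_single_of_ne h]
    simp

lemma isRegH_barR {x : LS} (hx : isRegH x) : isRegH (barR x) := by
  intro k hk
  show (-1:ℂ)^k * x.coeff k = 0
  rw [hx k hk, mul_zero]

lemma isRegH_C (c : ℂ) : isRegH (HahnSeries.C c) := by
  intro k hk
  exact HahnSeries.coeff_single_of_ne hk.ne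

lemma isRegH_add {x y : LS} (hx : isRegH x) (hy : isRegH y) : isRegH (x + y) := by
  intro k hk
  rw [HahnSeries.coeff_add, hx k hk, hy k hk, add_zero]

lemma isRegH_zero : isRegH (0 : LS) := fun k _ => rfl

lemma isRegH_neg {x : LS} (hx : isRegH x) : isRegH (-x) := by
  intro k hk
  rw [HahnSeries.coeff_neg, hx k hk, neg_zero]

lemma isRegH_sub {x y : LS} (hx : isRegH x) (hy : isRegH y) : isRegH (x - y) := by
  rw [sub_eq_add_neg]; exact isRegH_add hx (isRegH_neg hy)

lemma isRegH_mul {x y : LS} (hx : isRegH x) (hy : isRegH y) : isRegH (x * y) := by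
  intro k hk
  rw [HahnSeries.coeff_mul]
  refine Finset.sum_eq_zero ?_
  rintro ⟨i, j⟩ hij
  rw [Finset.mem_addAntidiagonal] at hij
  exfalso
  have hi : (0:ℤ) ≤ i := le_of_not_gt fun h => hij.1 (hx i h)
  have hj : (0:ℤ) ≤ j := le_of_not_gt fun h => hij.2.1 (hy j h)
  have := hij.2.2
  simp only at this
  omega

lemma isRegH_sum {ι : Type*} (s : Finset ι) (f : ι → LS) (h : ∀ i ∈ s, isRegH (f i)) :
    isRegH (∑ i ∈ s, f i) := by
  classical
  induction s using Finset.induction_on with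
  | empty => simpa using isRegH_zero
  | @insert a s' ha ih =>
    rw [Finset.sum_insert ha]
    exact isRegH_add (h a (Finset.mem_insert_self a s'))
      (ih fun i hi => h i (Finset.mem_insert_of_mem hi))
open Matrix in
lemma transpose_tmp : True := trivial

section AAlemmas

variable {r : ℕ}

lemma thetaA_apply (a : Fin r) (x : AA r) (d : Fin r →₀ ℕ) :
    thetaA a x d = (d a : LS) * x d := rfl

lemma thetaA_add (a : Fin r) (x y : AA r) :
    thetaA a (x + y) = thetaA a x + thetaA a y := by
  funext d
  show (d a : LS) * MvPowerSeries.coeff d (x + y) = _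
  rw [map_add, mul_add]
  rfl

lemma thetaA_sub (a : Fin r) (x y : AA r) :
    thetaA a (x - y) = thetaA a x - thetaA a y := by
  funext d
  show (d a : LS) * MvPowerSeries.coeff d (x - y) = _
  rw [map_sub, mul_sub]
  rfl

lemma thetaA_sum {ι : Type*} (a : Fin r) (s : Finset ι) (f : ι → AA r) :
    thetaA a (∑ i ∈ s, f i) = ∑ i ∈ s, thetaA a (f i) := by
  classical
  induction s using Finset.induction_on with
  | empty =>
    simp only [Finset.sum_empty]
    funext d
    show (d a : LS) * MvPowerSeries.coeff d 0 = MvPowerSeries.coeff d 0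
    rw [map_zero, mul_zero]
  | @insert b s' hb ih =>
    rw [Finset.sum_insert hb, Finset.sum_insert hb, thetaA_add, ih]

lemma thetaA_mul (a : Fin r) (x y : AA r) :
    thetaA a (x * y) = thetaA a x * y + x * thetaA a y := by
  funext d
  show (d a : LS) * MvPowerSeries.coeff d (x * y) =
    MvPowerSeries.coeff d (thetaA a x * y) + MvPowerSeries.coeff d (x * thetaA a y)
  rw [MvPowerSeries.coeff_mul, MvPowerSeries.coeff_mul, MvPowerSeries.coeff_mul,
    Finset.mul_sum, ← Finset.sum_add_distrib]
  refine Finset.sum_congr rfl ?_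
  rintro ⟨e, f⟩ hef
  rw [Finset.HasAntidiagonal.mem_antidiagonal] at hef
  show (d a : LS) * (x e * y f) = (e a : LS) * x e * y f + x e * ((f a : LS) * y f)
  have hd : (d a : ℕ) = e a + f a := by rw [← hef]; rfl
  rw [hd, Nat.cast_add]
  ring

lemma thetaA_C (a : Fin r) (c : LS) :
    thetaA a (MvPowerSeries.C (σ := Fin r) (R := LS) c) = 0 := by
  funext d
  show (d a : LS) * MvPowerSeries.coeff d (MvPowerSeries.C (σ := Fin r) (R := LS) c) =
    MvPowerSeries.coeff d 0
  rw [map_zero, MvPowerSeries.coeff_C]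
  by_cases h : d = 0
  · subst h; simp
  · simp [h]

lemma hbarA_mul_apply (x : AA r) (d : Fin r →₀ ℕ) :
    (hbarA r * x) d = hbarL * x d :=
  MvPowerSeries.coeff_C_mul d x hbarL

/-- The substitution `ħ ↦ -ħ` on `AA r`, as a ring homomorphism. -/
def barAA (r : ℕ) : AA r →+* AA r := MvPowerSeries.map (σ := Fin r) barR

lemma barAA_apply (x : AA r) (d : Fin r →₀ ℕ) : barAA r x d = barR (x d) := rfl

lemma barMat_eq {n : ℕ} (M : Matrix (Fin n) (Fin n) (AA r)) :
    barMat M = M.map (barAA r) := by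
  refine Matrix.ext fun i j => ?_
  funext d
  show barL (M i j d) = barAA r (M i j) d
  rw [barAA_apply]
  rfl

lemma barAA_theta (a : Fin r) (x : AA r) :
    barAA r (thetaA a x) = thetaA a (barAA r x) := by
  funext d
  rw [barAA_apply, thetaA_apply, thetaA_apply, barAA_apply, map_mul, map_natCast]

lemma barAA_hbarA : barAA r (hbarA r) = -(hbarA r) := by
  show MvPowerSeries.map (σ := Fin r) barR (MvPowerSeries.C (σ := Fin r) (R := LS) hbarL) = _
  rw [MvPowerSeries.map_C, barR_hbarL, map_neg]
  rfl

lemma barAA_cA (c : ℂ) : barAA r (cA r c) = cA r c := by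
  show MvPowerSeries.map (σ := Fin r) barR (MvPowerSeries.C (σ := Fin r) (R := LS) (HahnSeries.C c)) = _
  rw [MvPowerSeries.map_C, barR_C]
  rfl

lemma barAA_const {x : AA r} (hx : ∀ d, isConstH (x d)) : barAA r x = x := by
  funext d
  rw [barAA_apply, barR_const (hx d)]

/-- Regularity in `ħ` for elements of `AA r`. -/
def AARegH (x : AA r) : Prop := ∀ d, isRegH (x d)

lemma AARegH_add {x y : AA r} (hx : AARegH x) (hy : AARegH y) : AARegH (x + y) := by
  intro d
  have : (x + y) d = x d + y d := rfl
  rw [this]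
  exact isRegH_add (hx d) (hy d)

lemma AARegH_sub {x y : AA r} (hx : AARegH x) (hy : AARegH y) : AARegH (x - y) := by
  intro d
  have : (x - y) d = x d - y d := rfl
  rw [this]
  exact isRegH_sub (hx d) (hy d)

lemma AARegH_mul {x y : AA r} (hx : AARegH x) (hy : AARegH y) : AARegH (x * y) := by
  intro d
  have : (x * y) d = ∑ p ∈ Finset.HasAntidiagonal.antidiagonal d, x p.1 * y p.2 :=
    MvPowerSeries.coeff_mul d x y
  rw [this]
  exact isRegH_sum _ _ fun p _ => isRegH_mul (hx p.1) (hy p.2)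

lemma AARegH_sum {ι : Type*} (s : Finset ι) (f : ι → AA r) (h : ∀ i ∈ s, AARegH (f i)) :
    AARegH (∑ i ∈ s, f i) := by
  intro d
  have : (∑ i ∈ s, f i) d = ∑ i ∈ s, f i d := map_sum (MvPowerSeries.coeff d) f s
  rw [this]
  exact isRegH_sum _ _ fun i hi => h i hi d

lemma AARegH_cA (c : ℂ) : AARegH (cA r c) := by
  intro d
  have : cA r c d = MvPowerSeries.coeff d (MvPowerSeries.C (σ := Fin r) (R := LS) (HahnSeries.C c)) := rfl
  rw [this, MvPowerSeries.coeff_C]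
  by_cases h : d = 0
  · simp only [h, if_pos rfl]; exact isRegH_C c
  · simp only [h, if_neg h]; exact isRegH_zero

end AAlemmas

section Matlemmas
open Matrix

variable {r n : ℕ}

lemma MatRegH_iff (M : Matrix (Fin n) (Fin n) (AA r)) :
    MatRegH M ↔ ∀ i j, AARegH (M i j) := Iff.rfl

lemma MatRegH_mul {M N : Matrix (Fin n) (Fin n) (AA r)} (hM : MatRegH M) (hN : MatRegH N) :
    MatRegH (M * N) := by
  rw [MatRegH_iff] at *
  intro i j
  rw [show (M * N) i j = ∑ k, M i k * N k j from Matrix.mul_apply]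
  exact AARegH_sum _ _ fun k _ => AARegH_mul (hM i k) (hN k j)

lemma MatRegH_sub {M N : Matrix (Fin n) (Fin n) (AA r)} (hM : MatRegH M) (hN : MatRegH N) :
    MatRegH (M - N) := by
  rw [MatRegH_iff] at *
  intro i j
  rw [show (M - N) i j = M i j - N i j from rfl]
  exact AARegH_sub (hM i j) (hN i j)

lemma MatRegH_transpose {M : Matrix (Fin n) (Fin n) (AA r)} (hM : MatRegH M) :
    MatRegH Mᵀ := fun i j => hM j i

lemma MatRegH_barMat {M : Matrix (Fin n) (Fin n) (AA r)} (hM : MatRegH M) :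
    MatRegH (barMat M) := fun i j d => isRegH_barR (hM i j d)

lemma MatRegH_mapC (B : Matrix (Fin n) (Fin n) ℂ) : MatRegH (B.map (cA r)) :=
  fun i j => AARegH_cA (B i j)

/-- Leibniz rule for `thetaMat`. -/
lemma thetaMat_mul (a : Fin r) (M N : Matrix (Fin n) (Fin n) (AA r)) :
    thetaMat a (M * N) = thetaMat a M * N + M * thetaMat a N := by
  refine Matrix.ext fun i j => ?_
  show thetaA a ((M * N) i j) = (thetaMat a M * N) i j + (M * thetaMat a N) i j
  rw [Matrix.mul_apply, Matrix.mul_apply, Matrix.mul_apply, thetaA_sum, ← Finset.sum_add_distrib]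
  refine Finset.sum_congr rfl fun k _ => ?_
  rw [thetaA_mul]
  rfl

lemma thetaMat_add (a : Fin r) (M N : Matrix (Fin n) (Fin n) (AA r)) :
    thetaMat a (M + N) = thetaMat a M + thetaMat a N := by
  refine Matrix.ext fun i j => ?_
  show thetaA a (M i j + N i j) = thetaA a (M i j) + thetaA a (N i j)
  rw [thetaA_add]

lemma thetaMat_sub (a : Fin r) (M N : Matrix (Fin n) (Fin n) (AA r)) :
    thetaMat a (M - N) = thetaMat a M - thetaMat a N := by
  refine Matrix.ext fun i j => ?_
  show thetaA a (M i j - N i j) = thetaA a (M i j) - thetaA a (N i j)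
  rw [thetaA_sub]

lemma thetaMat_transpose (a : Fin r) (M : Matrix (Fin n) (Fin n) (AA r)) :
    thetaMat a Mᵀ = (thetaMat a M)ᵀ := rfl

lemma thetaMat_mapC (a : Fin r) (B : Matrix (Fin n) (Fin n) ℂ) :
    thetaMat a (B.map (cA r)) = 0 := by
  refine Matrix.ext fun i j => ?_
  show thetaA a (MvPowerSeries.C (σ := Fin r) (R := LS) (HahnSeries.C (B i j))) = 0
  rw [thetaA_C]

end Matlemmas
section Vanish
open Matrix

lemma coeff_finsum {n : ℕ} (f : Fin n → LS) (k : ℤ) :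
    (∑ l, f l).coeff k = ∑ l, (f l).coeff k :=
  map_sum (HahnSeries.coeff.addMonoidHom k) f Finset.univ

/-- Core vanishing lemma: a regular matrix solution of
`ħ m X = X A - A' X` with `m ≠ 0` vanishes. -/
lemma vanish {n : ℕ} (m : ℕ) (hm : m ≠ 0) (X : Matrix (Fin n) (Fin n) LS)
    (hreg : ∀ i j, isRegH (X i j))
    (A A' : Matrix (Fin n) (Fin n) ℂ)
    (heq : ∀ i j, hbarL * (HahnSeries.C (m : ℂ) * X i j) =
      (∑ l, X i l * HahnSeries.C (A l j)) - ∑ l, HahnSeries.C (A' i l) * X l j) :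
    X = 0 := by
  have main : ∀ t : ℕ, ∀ i j, ∀ k : ℤ, k < (t : ℤ) → (X i j).coeff k = 0 := by
    intro t
    induction t with
    | zero => intro i j k hk; exact hreg i j k (by exact_mod_cast hk)
    | succ t ih =>
      intro i j k hk
      have hk' : k < (t : ℤ) ∨ k = (t : ℤ) := by
        push_cast at hk
        omega
      rcases hk' with h | h
      · exact ih i j k h
      · have h0 := congrArg (fun z => z.coeff (k - 1)) (heq i j)
        have e1 : (hbarL * (HahnSeries.C (m : ℂ) * X i j)).coeff (k - 1) =
            (HahnSeries.C (m : ℂ) * X i j).coeff k := by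
          have h2 := HahnSeries.coeff_single_mul_add (r := (1 : ℂ))
            (x := HahnSeries.C (m : ℂ) * X i j) (a := k) (b := (-1 : ℤ))
          rw [← hbarL] at h2
          rw [show k - 1 = k + (-1 : ℤ) by ring, h2, one_mul]
        have e2 : (HahnSeries.C (m : ℂ) * X i j).coeff k = (m : ℂ) * (X i j).coeff k := by
          rw [HahnSeries.C_apply, HahnSeries.coeff_single_zero_mul]
        have hz : ∀ l : Fin n, (X i l).coeff (k - 1) = 0 := fun l => ih i l _ (by omega)
        have hz' : ∀ l : Fin n, (X l j).coeff (k - 1) = 0 := fun l => ih l j _ (by omega)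
        rw [e1, e2, HahnSeries.coeff_sub] at h0
        have e3 : (∑ l, X i l * HahnSeries.C (A l j)).coeff (k - 1) = 0 := by
          rw [coeff_finsum]
          refine Finset.sum_eq_zero fun l _ => ?_
          rw [HahnSeries.C_apply, HahnSeries.coeff_mul_single_zero, hz l, zero_mul]
        have e4 : (∑ l, HahnSeries.C (A' i l) * X l j).coeff (k - 1) = 0 := by
          rw [coeff_finsum]
          refine Finset.sum_eq_zero fun l _ => ?_
          rw [HahnSeries.C_apply, HahnSeries.coeff_single_zero_mul, hz' l, mul_zero]
        rw [e3, e4, sub_zero] at h0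
        have hmC : (m : ℂ) ≠ 0 := Nat.cast_ne_zero.mpr hm
        exact (mul_eq_zero.mp h0).resolve_left hmC
  refine Matrix.ext fun i j => ?_
  ext k
  rw [Matrix.zero_apply, HahnSeries.coeff_zero]
  exact main (k.toNat + 1) i j k (by omega)

/-- AA-level vanishing: a regular matrix `Q` with vanishing constant term
solving `ħ θ_a Q = Q p_a - p_aᵀ Q` vanishes. -/
lemma vanishAA {r n : ℕ} (Q : Matrix (Fin n) (Fin n) (AA r))
    (hreg : MatRegH Q)
    (hcc : ∀ i j, Q i j 0 = 0)
    (p : Fin r → Matrix (Fin n) (Fin n) ℂ)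
    (heq : ∀ a, hbarA r • thetaMat a Q =
      Q * (p a).map (cA r) - ((p a).map (cA r))ᵀ * Q) :
    Q = 0 := by
  refine Matrix.ext fun i j => ?_
  funext d
  by_cases hd : d = 0
  · subst hd
    exact hcc i j
  · obtain ⟨a, ha⟩ : ∃ a, d a ≠ 0 := by
      by_contra hcon
      push_neg at hcon
      exact hd (Finsupp.ext hcon)
    set X : Matrix (Fin n) (Fin n) LS := Matrix.of (fun i j => Q i j d) with hX
    have hXz : X = 0 := by
      refine vanish (d a) ha X (fun i j => hreg i j d) (p a) (p a)ᵀ ?_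
      intro i' j'
      have h0 : (hbarA r • thetaMat a Q) i' j' d =
          (Q * (p a).map (cA r) - ((p a).map (cA r))ᵀ * Q) i' j' d := by rw [heq a]
      -- LHS
      have eL : (hbarA r • thetaMat a Q) i' j' d =
          hbarL * (HahnSeries.C ((d a : ℕ) : ℂ) * Q i' j' d) := by
        have h1 : (hbarA r • thetaMat a Q) i' j' = hbarA r * thetaA a (Q i' j') := by
          rw [Matrix.smul_apply, smul_eq_mul]
          rfl
        rw [h1, hbarA_mul_apply, thetaA_apply]
        congr 1
      have eR1 : (Q * (p a).map (cA r)) i' j' d = ∑ l, Q i' l d * HahnSeries.C (p a l j') := by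
        rw [show (Q * (p a).map (cA r)) i' j' = ∑ l, Q i' l * (p a).map (cA r) l j'
          from Matrix.mul_apply]
        rw [show (∑ l, Q i' l * (p a).map (cA r) l j') d
          = ∑ l, (Q i' l * (p a).map (cA r) l j') d
          from map_sum (MvPowerSeries.coeff d)
            (fun l => Q i' l * (p a).map (cA r) l j') Finset.univ]
        refine Finset.sum_congr rfl fun l _ => ?_
        exact MvPowerSeries.coeff_mul_C d (Q i' l) (HahnSeries.C (p a l j'))
      have eR2 : (((p a).map (cA r))ᵀ * Q) i' j' d = ∑ l, HahnSeries.C (p a l i') * Q l j' d := by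
        rw [show (((p a).map (cA r))ᵀ * Q) i' j' = ∑ l, ((p a).map (cA r))ᵀ i' l * Q l j'
          from Matrix.mul_apply]
        rw [show (∑ l, ((p a).map (cA r))ᵀ i' l * Q l j') d
          = ∑ l, (((p a).map (cA r))ᵀ i' l * Q l j') d
          from map_sum (MvPowerSeries.coeff d)
            (fun l => ((p a).map (cA r))ᵀ i' l * Q l j') Finset.univ]
        refine Finset.sum_congr rfl fun l _ => ?_
        exact MvPowerSeries.coeff_C_mul d (Q l j') (HahnSeries.C (p a l i'))
      have eSub : (Q * (p a).map (cA r) - ((p a).map (cA r))ᵀ * Q) i' j' d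
          = (Q * (p a).map (cA r)) i' j' d - (((p a).map (cA r))ᵀ * Q) i' j' d := rfl
      rw [eL, eSub, eR1, eR2] at h0
      exact h0
    show X i j = (0 : LS)
    rw [hXz]
    rfl

end Vanish
section Dot
open Matrix

variable {n : ℕ}

lemma dot_aux {R : Type*} [CommRing R] (M N : Matrix (Fin n) (Fin n) R) (v w : Fin n → R) :
    dotProduct (M.mulVec v) (N.mulVec w) =
      dotProduct v ((Mᵀ * N).mulVec w) := by
  rw [← Matrix.mulVec_mulVec]
  conv_rhs => rw [dotProduct_mulVec, Matrix.vecMul_transpose]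

lemma matEq_of_dot' {R : Type*} [CommRing R] (M N : Matrix (Fin n) (Fin n) R)
    (h : ∀ v w : Fin n → R,
      dotProduct v (M.mulVec w) = dotProduct v (N.mulVec w)) :
    M = N := by
  refine Matrix.ext fun i j => ?_
  have := h (Pi.single i 1) (Pi.single j 1)
  simpa [Matrix.mulVec_single, single_dotProduct] using this

lemma cA_single {r : ℕ} (i : Fin n) :
    (fun k : Fin n => cA r (Pi.single (M := fun _ => ℂ) i 1 k)) = Pi.single i (1 : AA r) := by
  funext k
  rcases eq_or_ne k i with h | h
  · subst h
    simp
  · simp [Pi.single_apply, h]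

lemma matEq_of_dot {r : ℕ} (M N : Matrix (Fin n) (Fin n) (AA r))
    (h : ∀ v w : Fin n → ℂ,
      dotProduct (fun i => cA r (v i)) (M.mulVec (fun i => cA r (w i))) =
      dotProduct (fun i => cA r (v i)) (N.mulVec (fun i => cA r (w i)))) :
    M = N := by
  refine Matrix.ext fun i j => ?_
  have := h (Pi.single i 1) (Pi.single j 1)
  rw [cA_single, cA_single] at this
  simpa [Matrix.mulVec_single, single_dotProduct] using this

lemma dot_map {r : ℕ} (B : Matrix (Fin n) (Fin n) ℂ) (v w : Fin n → ℂ) :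
    dotProduct (fun i => cA r (v i)) ((B.map (cA r)).mulVec (fun i => cA r (w i)))
      = cA r (dotProduct v (B.mulVec w)) := by
  simp only [dotProduct, Matrix.mulVec, Matrix.map_apply, map_sum, _root_.map_mul]

end Dot

section MatBar
open Matrix

variable {r n : ℕ}

lemma barMat_apply (M : Matrix (Fin n) (Fin n) (AA r)) (i j : Fin n) :
    barMat M i j = barAA r (M i j) := by
  rw [barMat_eq]
  rfl

lemma barMat_mul (M N : Matrix (Fin n) (Fin n) (AA r)) :
    barMat (M * N) = barMat M * barMat N := by
  rw [barMat_eq, barMat_eq, barMat_eq, _root_.Matrix.map_mul]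

lemma barMat_sub (M N : Matrix (Fin n) (Fin n) (AA r)) :
    barMat (M - N) = barMat M - barMat N := by
  refine Matrix.ext fun i j => ?_
  rw [barMat_apply, Matrix.sub_apply, Matrix.sub_apply, barMat_apply, barMat_apply, map_sub]

lemma barMat_theta (a : Fin r) (M : Matrix (Fin n) (Fin n) (AA r)) :
    barMat (thetaMat a M) = thetaMat a (barMat M) := by
  refine Matrix.ext fun i j => ?_
  rw [barMat_apply]
  show barAA r (thetaA a (M i j)) = thetaA a (barMat M i j)
  rw [barAA_theta, barMat_apply]

lemma barMat_smul_hbar (M : Matrix (Fin n) (Fin n) (AA r)) :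
    barMat (hbarA r • M) = (-(hbarA r)) • barMat M := by
  refine Matrix.ext fun i j => ?_
  rw [barMat_apply, Matrix.smul_apply, Matrix.smul_apply, smul_eq_mul, smul_eq_mul,
    _root_.map_mul, barAA_hbarA, barMat_apply]

end MatBar
section MSmul
open Matrix
variable {r n : ℕ}

lemma Msmul_apply (c : AA r) (M : Matrix (Fin n) (Fin n) (AA r)) (i j : Fin n) :
    (c • M) i j = c * M i j := by
  rw [Matrix.smul_apply, smul_eq_mul]

lemma Msmul_add (c : AA r) (M N : Matrix (Fin n) (Fin n) (AA r)) :
    c • (M + N) = c • M + c • N := by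
  refine Matrix.ext fun i j => ?_
  rw [Msmul_apply, Matrix.add_apply, Matrix.add_apply, Msmul_apply, Msmul_apply, mul_add]

lemma Msmul_zero (c : AA r) : c • (0 : Matrix (Fin n) (Fin n) (AA r)) = 0 := by
  refine Matrix.ext fun i j => ?_
  rw [Msmul_apply, Matrix.zero_apply, mul_zero]

lemma Mneg_smul (c : AA r) (M : Matrix (Fin n) (Fin n) (AA r)) :
    (-c) • M = -(c • M) := by
  refine Matrix.ext fun i j => ?_
  rw [Msmul_apply, Matrix.neg_apply, Msmul_apply]
  ring

lemma Msmul_transpose (c : AA r) (M : Matrix (Fin n) (Fin n) (AA r)) :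
    (c • M)ᵀ = c • Mᵀ := by
  refine Matrix.ext fun i j => ?_
  rw [Matrix.transpose_apply, Msmul_apply, Msmul_apply, Matrix.transpose_apply]

lemma Msmul_mul_left (c : AA r) (M N : Matrix (Fin n) (Fin n) (AA r)) :
    (c • M) * N = c • (M * N) := by
  refine Matrix.ext fun i j => ?_
  rw [Matrix.mul_apply, Msmul_apply, Matrix.mul_apply, Finset.mul_sum]
  refine Finset.sum_congr rfl fun k _ => ?_
  rw [Msmul_apply, mul_assoc]

lemma Msmul_mul_right (c : AA r) (M N : Matrix (Fin n) (Fin n) (AA r)) :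
    M * (c • N) = c • (M * N) := by
  refine Matrix.ext fun i j => ?_
  rw [Matrix.mul_apply, Msmul_apply, Matrix.mul_apply, Finset.mul_sum]
  refine Finset.sum_congr rfl fun k _ => ?_
  rw [Msmul_apply]
  ring

end MSmul

open Matrix

/-- **Unitarity of `S` ⟺ self-adjointness of the connection matrices**
(equivalence (1) ⇔ (3) of the polynomiality Proposition; cf. the unitarity
Lemma for the quantum-cohomology `S`).  Let `Ω_a` be flat and independent of
`ħ`, `p_a = Ω_a|_{q=0}`, `B` a symmetric pairing with `B(p_a v, w) = B(v, p_a w)`,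
and `S ∈ Mat_n(ℂ[[ħ⁻¹]][[q]])` the flat section with `S|_{q=0} = Id`.  Then
`B(Ω_a v, w) = B(v, Ω_a w)` for all `a, v, w` iff `B(S̄ v, S w) = B(v, w)`
for all `v, w`, where `S̄(q,ħ) = S(q,−ħ)`. -/
theorem unitarity_iff_selfadjoint {r n : ℕ} (hr : 1 ≤ r) (hn : 1 ≤ n)
    (Ω : Fin r → Matrix (Fin n) (Fin n) (AA r))
    (hconst : ∀ a, MatConstH (Ω a))
    (hflat1 : ∀ a b, thetaMat a (Ω b) = thetaMat b (Ω a))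
    (hflat2 : ∀ a b, Ω a * Ω b = Ω b * Ω a)
    (p : Fin r → Matrix (Fin n) (Fin n) ℂ)
    (hp : ∀ a i j, ccA (Ω a i j) = HahnSeries.C (p a i j))
    (B : Matrix (Fin n) (Fin n) ℂ)
    (hBsym : B.transpose = B)
    (hBp : ∀ (a : Fin r) (v w : Fin n → ℂ),
      dotProduct ((p a).mulVec v) (B.mulVec w) =
      dotProduct v (B.mulVec ((p a).mulVec w)))
    (S : Matrix (Fin n) (Fin n) (AA r))
    (hSreg : MatRegH S)
    (hScc : S.map ccA = 1)
    (hSeq : ∀ a, hbarA r • thetaMat a S + Ω a * S - S * (p a).map (cA r) = 0) :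
    (∀ (a : Fin r) (v w : Fin n → ℂ),
        dotProduct ((Ω a).mulVec (fun i => cA r (v i)))
          ((B.map (cA r)).mulVec (fun i => cA r (w i))) =
        dotProduct (fun i => cA r (v i))
          ((B.map (cA r)).mulVec ((Ω a).mulVec (fun i => cA r (w i))))) ↔
    (∀ v w : Fin n → ℂ,
        dotProduct ((barMat S).mulVec (fun i => cA r (v i)))
          ((B.map (cA r)).mulVec (S.mulVec (fun i => cA r (w i)))) =
        cA r (dotProduct v (B.mulVec w))) := by
  classical
  set BA : Matrix (Fin n) (Fin n) (AA r) := B.map (cA r) with hBAdef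
  set pA : Fin r → Matrix (Fin n) (Fin n) (AA r) := fun a => (p a).map (cA r) with hpAdef
  set Sb : Matrix (Fin n) (Fin n) (AA r) := barMat S with hSbdef
  -- self-adjointness of p over ℂ, in matrix form
  have hBpC : ∀ a, (p a)ᵀ * B = B * p a := by
    intro a
    refine matEq_of_dot' _ _ fun v w => ?_
    rw [← dot_aux, ← Matrix.mulVec_mulVec]
    exact hBp a v w
  have hBpA : ∀ a, (pA a)ᵀ * BA = BA * pA a := by
    intro a
    have h := congrArg (fun M => M.map (cA r)) (hBpC a)
    simpa only [_root_.Matrix.map_mul, Matrix.transpose_map] using h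
  -- rearrange the flat-section equation
  have hSeqS : ∀ a, hbarA r • thetaMat a S = S * pA a - Ω a * S := by
    intro a
    have h2 : hbarA r • thetaMat a S + (Ω a * S - S * pA a) = 0 := by
      rw [← add_sub_assoc]
      exact hSeq a
    rw [eq_neg_of_add_eq_zero_left h2, neg_sub]
  -- bar of various objects
  have hbarOmega : ∀ a, barMat (Ω a) = Ω a := by
    intro a
    refine Matrix.ext fun i j => ?_
    funext d
    exact barR_const (hconst a i j d)
  have hbarpA : ∀ a, barMat (pA a) = pA a := by
    intro a
    rw [barMat_eq]
    refine Matrix.ext fun i j => ?_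
    exact barAA_cA (p a i j)
  -- barred flat-section equation
  have hSeqSb : ∀ a, hbarA r • thetaMat a Sb = Ω a * Sb - Sb * pA a := by
    intro a
    have h := congrArg barMat (hSeqS a)
    rw [barMat_smul_hbar, barMat_theta, barMat_sub, barMat_mul, barMat_mul,
      hbarpA, hbarOmega, ← hSbdef, Mneg_smul] at h
    have h3 := congrArg Neg.neg h
    rw [neg_neg, neg_sub] at h3
    exact h3
  -- key derivative computation
  have key : ∀ a, hbarA r • thetaMat a (Sbᵀ * BA * S)
      = Sbᵀ * ((Ω a)ᵀ * BA - BA * Ω a) * S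
        + ((Sbᵀ * BA * S) * pA a - (pA a)ᵀ * (Sbᵀ * BA * S)) := by
    intro a
    have hθBA : thetaMat a BA = 0 := thetaMat_mapC a B
    have e1 : hbarA r • thetaMat a (Sbᵀ * BA * S)
        = (hbarA r • thetaMat a Sb)ᵀ * BA * S + Sbᵀ * BA * (hbarA r • thetaMat a S) := by
      rw [thetaMat_mul, thetaMat_mul, hθBA, mul_zero, add_zero, thetaMat_transpose]
      simp only [Msmul_add, Msmul_transpose, Msmul_mul_left, Msmul_mul_right]
    rw [e1, hSeqSb a, hSeqS a, Matrix.transpose_sub, Matrix.transpose_mul,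
      Matrix.transpose_mul]
    simp only [sub_mul, mul_sub]
    simp only [mul_assoc]
    abel
  -- regularity of the pairing matrix
  have hregP : MatRegH (Sbᵀ * BA * S - BA) :=
    MatRegH_sub
      (MatRegH_mul (MatRegH_mul (MatRegH_transpose (MatRegH_barMat hSreg)) (MatRegH_mapC B))
        hSreg)
      (MatRegH_mapC B)
  -- constant term of the pairing matrix
  have hSbcc : Sb.map ccA = 1 := by
    refine Matrix.ext fun i j => ?_
    show ccA (Sb i j) = (1 : Matrix (Fin n) (Fin n) LS) i j
    have h1 : ccA (Sb i j) = barR (ccA (S i j)) := by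
      rw [hSbdef, barMat_apply]
      exact MvPowerSeries.constantCoeff_map barR (S i j)
    have h2 : ccA (S i j) = (1 : Matrix (Fin n) (Fin n) LS) i j :=
      congrFun (congrFun hScc i) j
    rw [h1, h2]
    by_cases h : i = j
    · subst h
      rw [Matrix.one_apply_eq]
      exact _root_.map_one barR
    · rw [Matrix.one_apply_ne h]
      exact _root_.map_zero barR
  have hPcc : (Sbᵀ * BA * S).map ccA = BA.map ccA := by
    rw [_root_.Matrix.map_mul (f := ccA), _root_.Matrix.map_mul (f := ccA),
      Matrix.transpose_map, hSbcc, hScc, Matrix.transpose_one, one_mul, mul_one]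
  have hQcc : ∀ i j, (Sbᵀ * BA * S - BA) i j 0 = 0 := by
    intro i j
    show ccA ((Sbᵀ * BA * S - BA) i j) = 0
    rw [Matrix.sub_apply, map_sub]
    have h5 := congrFun (congrFun hPcc i) j
    rw [Matrix.map_apply, Matrix.map_apply] at h5
    rw [h5, sub_self]
  constructor
  · -- (1) → (3)
    intro H
    have H1 : ∀ a, (Ω a)ᵀ * BA = BA * Ω a := by
      intro a
      refine matEq_of_dot _ _ fun v w => ?_
      rw [← dot_aux, ← Matrix.mulVec_mulVec]
      exact H a v w
    have hQeq : ∀ a, hbarA r • thetaMat a (Sbᵀ * BA * S - BA)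
        = (Sbᵀ * BA * S - BA) * pA a - (pA a)ᵀ * (Sbᵀ * BA * S - BA) := by
      intro a
      rw [thetaMat_sub, thetaMat_mapC]
      have e2 : thetaMat a (Sbᵀ * BA * S) - (0 : Matrix (Fin n) (Fin n) (AA r))
          = thetaMat a (Sbᵀ * BA * S) := sub_zero _
      rw [e2, key a, H1 a, sub_self, mul_zero, zero_mul, zero_add]
      simp only [sub_mul, mul_sub]
      rw [hBpA a]
      abel
    have hQ0 : Sbᵀ * BA * S - BA = 0 := vanishAA _ hregP hQcc p hQeq
    have hPeq : Sbᵀ * BA * S = BA := sub_eq_zero.mp hQ0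
    intro v w
    rw [Matrix.mulVec_mulVec, dot_aux, ← mul_assoc, hPeq, hBAdef, dot_map]
  · -- (3) → (1)
    intro H
    have hPeq : Sbᵀ * BA * S = BA := by
      refine matEq_of_dot _ _ fun v w => ?_
      have h := H v w
      rw [Matrix.mulVec_mulVec, dot_aux, ← mul_assoc] at h
      rw [h, hBAdef, dot_map]
    -- invertibility of S and Sbᵀ
    have hdetS : IsUnit S.det := by
      refine MvPowerSeries.isUnit_iff_constantCoeff.mpr ?_
      have h1 : ccA S.det = (S.map ccA).det := RingHom.map_det ccA S
      rw [hScc, Matrix.det_one] at h1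
      show IsUnit (ccA S.det)
      rw [h1]
      exact isUnit_one
    have hunitS : IsUnit S := (Matrix.isUnit_iff_isUnit_det S).mpr hdetS
    have hdetSbt : IsUnit Sbᵀ.det := by
      rw [Matrix.det_transpose, hSbdef, barMat_eq]
      have h4 : (S.map (barAA r)).det = barAA r S.det := (RingHom.map_det (barAA r) S).symm
      rw [h4]
      exact hdetS.map (barAA r)
    have hunitSbt : IsUnit Sbᵀ := (Matrix.isUnit_iff_isUnit_det Sbᵀ).mpr hdetSbt
    have H1 : ∀ a, (Ω a)ᵀ * BA = BA * Ω a := by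
      intro a
      have hk := key a
      rw [hPeq, thetaMat_mapC, Msmul_zero, hBpA a, sub_self, add_zero] at hk
      -- hk : 0 = Sbᵀ * ((Ω a)ᵀ * BA - BA * Ω a) * S
      obtain ⟨US, hUS⟩ := hunitS
      obtain ⟨UT, hUT⟩ := hunitSbt
      have h2 : Sbᵀ * ((Ω a)ᵀ * BA - BA * Ω a) * S * (↑US⁻¹ : Matrix (Fin n) (Fin n) (AA r))
          = 0 := by rw [← hk, zero_mul]
      rw [mul_assoc, ← hUS, Units.mul_inv, mul_one] at h2
      have h3 : (↑UT⁻¹ : Matrix (Fin n) (Fin n) (AA r)) * (Sbᵀ * ((Ω a)ᵀ * BA - BA * Ω a))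
          = 0 := by rw [h2, mul_zero]
      rw [← mul_assoc, ← hUT, Units.inv_mul, one_mul] at h3
      exact sub_eq_zero.mp h3
    intro a v w
    rw [dot_aux, H1 a, ← Matrix.mulVec_mulVec]
end
end
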